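/- Let p ≥ 3 be an integer. Then for all integers m, ℓ with 1 ≤ m ≤ p and 1 ≤ ℓ ≤ m, and for every z ∈ ℂ with Re(z) ≤ 0 satisfying |∑_{k=0}^{p} z^k/k!| ≤ 1, one has (m^{p−1} / ((p−m)! · (m−1)!)) · |1 + z/m|^{ℓ−1} < 7.01^p / (3.9·π·√(p−1)). -/

import Mathlib

open Finset Nat


-- term of exp series bound
lemma pow_div_factorial_le_exp (x : ℝ) (hx : 0 ≤ x) (n : ℕ) :
    x ^ n / (n ! : ℝ) ≤ Real.exp x := by
  have h := Real.sum_le_exp_of_nonneg hx (n + 1)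
  refine le_trans ?_ h
  have hnn : ∀ i ∈ Finset.range (n+1), (0:ℝ) ≤ x ^ i / (i ! : ℝ) := by
    intro i _; positivity
  exact Finset.single_le_sum hnn (by simp)

-- (a+b)! ≤ a! * (a+b)^b
lemma factorial_add_le (a b : ℕ) : (a + b)! ≤ a ! * (a + b) ^ b := by
  induction b with
  | zero => simp
  | succ b ih =>
      have h1 : (a + (b+1))! = (a + b)! * (a + b + 1) := by
        rw [show a + (b+1) = (a+b) + 1 by ring, Nat.factorial_succ]; ring
      calc (a + (b+1))! = (a + b)! * (a + b + 1) := h1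
        _ ≤ (a ! * (a + b) ^ b) * (a + b + 1) := Nat.mul_le_mul_right _ ih
        _ ≤ (a ! * (a + b + 1) ^ b) * (a + b + 1) := by
            have h2 : (a+b)^b ≤ (a+b+1)^b := Nat.pow_le_pow_left (by omega) b
            exact Nat.mul_le_mul_right _ (Nat.mul_le_mul_left _ h2)
        _ = a ! * (a + (b+1)) ^ (b+1) := by rw [pow_succ]; ring_nf

-- 2^(p-1) * p! ≤ p^p  (real version)
lemma two_pow_factorial_le (p : ℕ) (hp : 1 ≤ p) : (2:ℝ) ^ (p - 1) * (p ! : ℝ) ≤ (p : ℝ) ^ p := by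
  induction p with
  | zero => omega
  | succ p ih =>
      rcases Nat.lt_or_ge 1 (p+1) with h | h
      · have hp1 : 1 ≤ p := by omega
        have ih' := ih hp1
        have hp0 : (0:ℝ) < p := by exact_mod_cast hp1
        have key : (2:ℝ) * (p:ℝ) ^ p ≤ ((p:ℝ) + 1) ^ p := by
          have h2 : (1 + (p:ℝ) * (1/p)) ≤ (1 + 1/p) ^ p := one_add_mul_le_pow (le_trans (by norm_num : (-2:ℝ) ≤ 0) (by positivity : (0:ℝ) ≤ 1/(p:ℝ))) p
          rw [mul_one_div, div_self (ne_of_gt hp0)] at h2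
          have h3 : ((p:ℝ)+1)^p = ((p:ℝ))^p * (1+1/p)^p := by
            rw [← mul_pow]; congr 1; field_simp
          rw [h3]
          nlinarith [pow_pos hp0 p]
        have hfact : ((p+1)! : ℝ) = ((p:ℝ)+1) * (p ! : ℝ) := by
          push_cast [Nat.factorial_succ]; ring
        have hpow : (2:ℝ) ^ (p + 1 - 1) = 2 * 2 ^ (p-1) := by
          rw [show p + 1 - 1 = (p-1) + 1 by omega, pow_succ]; ring
        rw [hfact, hpow]
        have hpp : (0:ℝ) < (p:ℝ)+1 := by positivity
        calc 2 * 2^(p-1) * (((p:ℝ)+1) * (p ! : ℝ)) = ((p:ℝ)+1) * (2 * (2^(p-1) * (p ! : ℝ))) := by ring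
          _ ≤ ((p:ℝ)+1) * (2 * (p:ℝ)^p) := by
              have := mul_le_mul_of_nonneg_left ih' (by norm_num : (0:ℝ) ≤ 2)
              exact mul_le_mul_of_nonneg_left this (le_of_lt hpp)
          _ ≤ ((p:ℝ)+1) * ((p:ℝ)+1)^p := mul_le_mul_of_nonneg_left key (le_of_lt hpp)
          _ = ((p:ℝ)+1) ^ (p+1) := by rw [pow_succ]; ring
          _ = (((p+1):ℕ):ℝ) ^ (p+1) := by push_cast; ring
      · have hp0 : p = 0 := by omega
        subst hp0; simp



lemma poly_identity (p : ℕ) (hp : 1 ≤ p) (z : ℂ) :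
    (z - p) * (∑ k ∈ Finset.range (p + 1), z ^ k / (Nat.factorial k : ℂ)) + p
      + ∑ k ∈ Finset.range p, ((p - 1 - k : ℕ) : ℂ) * z ^ (k+1) / (Nat.factorial (k+1) : ℂ)
    = z ^ (p+1) / (Nat.factorial p : ℂ) := by
  have h1 : (z - p) * (∑ k ∈ Finset.range (p + 1), z ^ k / (Nat.factorial k : ℂ))
      = (∑ k ∈ Finset.range (p + 1), z ^ (k+1) / (Nat.factorial k : ℂ))
        - (∑ k ∈ Finset.range (p + 1), (p : ℂ) * z ^ k / (Nat.factorial k : ℂ)) := by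
    rw [sub_mul, Finset.mul_sum, Finset.mul_sum]
    congr 1
    · exact Finset.sum_congr rfl (fun k _ => by rw [pow_succ]; ring)
    · exact Finset.sum_congr rfl (fun k _ => by ring)
  have h2 : (∑ k ∈ Finset.range (p + 1), z ^ (k+1) / (Nat.factorial k : ℂ))
      = (∑ k ∈ Finset.range p, z ^ (k+1) / (Nat.factorial k : ℂ)) + z ^ (p+1) / (Nat.factorial p : ℂ) :=
    Finset.sum_range_succ _ p
  have h3 : (∑ k ∈ Finset.range (p + 1), (p : ℂ) * z ^ k / (Nat.factorial k : ℂ))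
      = (∑ k ∈ Finset.range p, (p : ℂ) * z ^ (k+1) / (Nat.factorial (k+1) : ℂ)) + p := by
    rw [Finset.sum_range_succ' (fun k => (p : ℂ) * z ^ k / (Nat.factorial k : ℂ)) p]
    simp
  rw [h1, h2, h3]
  have h4 : ∀ k ∈ Finset.range p,
      z ^ (k+1) / (Nat.factorial k : ℂ) - (p : ℂ) * z ^ (k+1) / (Nat.factorial (k+1) : ℂ)
        + ((p - 1 - k : ℕ) : ℂ) * z ^ (k+1) / (Nat.factorial (k+1) : ℂ) = 0 := by
    intro k hk
    rw [Finset.mem_range] at hk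
    have hcast : ((p - 1 - k : ℕ) : ℂ) = (p : ℂ) - 1 - k := by
      have h5 : (p - 1 - k) + (k + 1) = p := by omega
      have h6 := congrArg (Nat.cast : ℕ → ℂ) h5
      push_cast at h6
      linear_combination h6
    have hfs : (Nat.factorial (k+1) : ℂ) = ((k : ℂ) + 1) * (Nat.factorial k : ℂ) := by
      push_cast [Nat.factorial_succ]
      ring
    have hk0 : (Nat.factorial k : ℂ) ≠ 0 := by exact_mod_cast Nat.factorial_ne_zero k
    have hk1 : ((k : ℂ) + 1) ≠ 0 := Nat.cast_add_one_ne_zero k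
    rw [hcast, hfs]
    field_simp
    ring
  calc (∑ k ∈ Finset.range p, z ^ (k+1) / (Nat.factorial k : ℂ)) + z ^ (p+1) / (Nat.factorial p : ℂ)
        - ((∑ k ∈ Finset.range p, (p : ℂ) * z ^ (k+1) / (Nat.factorial (k+1) : ℂ)) + p) + p
        + ∑ k ∈ Finset.range p, ((p - 1 - k : ℕ) : ℂ) * z ^ (k+1) / (Nat.factorial (k+1) : ℂ)
      = z ^ (p+1) / (Nat.factorial p : ℂ)
        + ∑ k ∈ Finset.range p, (z ^ (k+1) / (Nat.factorial k : ℂ)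
            - (p : ℂ) * z ^ (k+1) / (Nat.factorial (k+1) : ℂ)
            + ((p - 1 - k : ℕ) : ℂ) * z ^ (k+1) / (Nat.factorial (k+1) : ℂ)) := by
        rw [Finset.sum_add_distrib, Finset.sum_sub_distrib]
        ring
    _ = z ^ (p+1) / (Nat.factorial p : ℂ) := by
        rw [Finset.sum_congr rfl h4]
        simp



lemma abs_le_of_cond (p : ℕ) (hp : 1 ≤ p) (z : ℂ)
    (hz : ‖∑ k ∈ Finset.range (p + 1), z ^ k / (Nat.factorial k : ℂ)‖ ≤ 1)
    (R : ℝ) (hR0 : 0 < R)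
    (hcond : R + 2 * p + ∑ k ∈ Finset.range p, ((p - 1 - k : ℕ) : ℝ) * R ^ (k+1) / (Nat.factorial (k+1) : ℝ)
      < R ^ (p+1) / (Nat.factorial p : ℝ)) :
    ‖z‖ ≤ R := by
  by_contra hcon
  push_neg at hcon
  set r := ‖z‖ with hr
  have hrR : R < r := hcon
  have hu : 1 ≤ r / R := (one_le_div hR0).mpr (le_of_lt hrR)
  have hr0 : 0 < r := lt_trans hR0 hrR
  set u := r / R with hudef
  have hup : 1 ≤ u ^ (p+1) := one_le_pow₀ hu
  -- upper bound from identity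
  have hub : r ^ (p+1) / (Nat.factorial p : ℝ)
      ≤ r + 2 * p + ∑ k ∈ Finset.range p, ((p - 1 - k : ℕ) : ℝ) * r ^ (k+1) / (Nat.factorial (k+1) : ℝ) := by
    have hid := poly_identity p hp z
    have habs : ‖z ^ (p+1) / (Nat.factorial p : ℂ)‖ = r ^ (p+1) / (Nat.factorial p : ℝ) := by
      rw [norm_div, norm_pow]
      congr 1
      exact_mod_cast Complex.norm_natCast (Nat.factorial p)
    rw [← hid] at habs
    rw [← habs]
    have t1 : ‖(z - p) * (∑ k ∈ Finset.range (p + 1), z ^ k / (Nat.factorial k : ℂ))‖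
        ≤ r + p := by
      rw [norm_mul]
      have e1 : ‖z - p‖ ≤ r + p := by
        refine le_trans (norm_sub_le _ _) ?_
        rw [Complex.norm_natCast]
      have e2 : ‖∑ k ∈ Finset.range (p + 1), z ^ k / (Nat.factorial k : ℂ)‖ ≤ 1 := hz
      calc ‖z - p‖ * ‖∑ k ∈ Finset.range (p + 1), z ^ k / (Nat.factorial k : ℂ)‖
          ≤ (r + p) * 1 := by
            apply mul_le_mul e1 e2 (norm_nonneg _) (by positivity)
        _ = r + p := by ring
    have t2 : ‖∑ k ∈ Finset.range p, ((p - 1 - k : ℕ) : ℂ) * z ^ (k+1) / (Nat.factorial (k+1) : ℂ)‖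
        ≤ ∑ k ∈ Finset.range p, ((p - 1 - k : ℕ) : ℝ) * r ^ (k+1) / (Nat.factorial (k+1) : ℝ) := by
      refine le_trans (norm_sum_le _ _) ?_
      apply Finset.sum_le_sum
      intro k hk
      rw [norm_div, norm_mul, norm_pow]
      rw [Complex.norm_natCast, Complex.norm_natCast]
    calc ‖(z - p) * (∑ k ∈ Finset.range (p + 1), z ^ k / (Nat.factorial k : ℂ)) + p
          + ∑ k ∈ Finset.range p, ((p - 1 - k : ℕ) : ℂ) * z ^ (k+1) / (Nat.factorial (k+1) : ℂ)‖
        ≤ ‖(z - p) * (∑ k ∈ Finset.range (p + 1), z ^ k / (Nat.factorial k : ℂ)) + p‖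
          + ‖∑ k ∈ Finset.range p, ((p - 1 - k : ℕ) : ℂ) * z ^ (k+1) / (Nat.factorial (k+1) : ℂ)‖ :=
          norm_add_le _ _
      _ ≤ (‖(z - p) * (∑ k ∈ Finset.range (p + 1), z ^ k / (Nat.factorial k : ℂ))‖ + ‖(p : ℂ)‖)
          + ‖∑ k ∈ Finset.range p, ((p - 1 - k : ℕ) : ℂ) * z ^ (k+1) / (Nat.factorial (k+1) : ℂ)‖ := by
          gcongr
          exact norm_add_le _ _
      _ ≤ ((r + p) + p) + ∑ k ∈ Finset.range p, ((p - 1 - k : ℕ) : ℝ) * r ^ (k+1) / (Nat.factorial (k+1) : ℝ) := by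
          rw [Complex.norm_natCast]
          gcongr
      _ = r + 2 * p + ∑ k ∈ Finset.range p, ((p - 1 - k : ℕ) : ℝ) * r ^ (k+1) / (Nat.factorial (k+1) : ℝ) := by
          ring
  -- lower bound: scaling
  have hru : r = R * u := by
    rw [hudef, mul_comm, div_mul_cancel₀ r (ne_of_gt hR0)]
  have hscale : r + 2 * p + ∑ k ∈ Finset.range p, ((p - 1 - k : ℕ) : ℝ) * r ^ (k+1) / (Nat.factorial (k+1) : ℝ)
      < r ^ (p+1) / (Nat.factorial p : ℝ) := by
    have hterm : ∀ k ∈ Finset.range p,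
        ((p - 1 - k : ℕ) : ℝ) * r ^ (k+1) / (Nat.factorial (k+1) : ℝ)
        ≤ (((p - 1 - k : ℕ) : ℝ) * R ^ (k+1) / (Nat.factorial (k+1) : ℝ)) * u ^ (p+1) := by
      intro k hk
      rw [Finset.mem_range] at hk
      have hrw : ((p - 1 - k : ℕ) : ℝ) * r ^ (k+1) / (Nat.factorial (k+1) : ℝ)
          = (((p - 1 - k : ℕ) : ℝ) * R ^ (k+1) / (Nat.factorial (k+1) : ℝ)) * u ^ (k+1) := by
        rw [hru, mul_pow]
        ring
      rw [hrw]
      have hk1 : u ^ (k+1) ≤ u ^ (p+1) := pow_le_pow_right₀ hu (by omega)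
      have hc0 : (0:ℝ) ≤ ((p - 1 - k : ℕ) : ℝ) * R ^ (k+1) / (Nat.factorial (k+1) : ℝ) := by positivity
      exact mul_le_mul_of_nonneg_left hk1 hc0
    have h1 : r ≤ R * u ^ (p+1) := by
      rw [hru]
      exact mul_le_mul_of_nonneg_left (le_self_pow₀ hu (Nat.succ_ne_zero p)) (le_of_lt hR0)
    have h2 : 2 * (p:ℝ) ≤ 2 * (p:ℝ) * u ^ (p+1) := by
      nlinarith [hup, Nat.cast_nonneg (α := ℝ) p]
    have h3 : ∑ k ∈ Finset.range p, ((p - 1 - k : ℕ) : ℝ) * r ^ (k+1) / (Nat.factorial (k+1) : ℝ)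
        ≤ (∑ k ∈ Finset.range p, ((p - 1 - k : ℕ) : ℝ) * R ^ (k+1) / (Nat.factorial (k+1) : ℝ)) * u ^ (p+1) := by
      rw [Finset.sum_mul]
      exact Finset.sum_le_sum hterm
    have h4 : (R + 2 * p + ∑ k ∈ Finset.range p, ((p - 1 - k : ℕ) : ℝ) * R ^ (k+1) / (Nat.factorial (k+1) : ℝ)) * u ^ (p+1)
        < (R ^ (p+1) / (Nat.factorial p : ℝ)) * u ^ (p+1) := by
      apply mul_lt_mul_of_pos_right hcond
      positivity
    have h5 : (R ^ (p+1) / (Nat.factorial p : ℝ)) * u ^ (p+1) = r ^ (p+1) / (Nat.factorial p : ℝ) := by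
      rw [hru, mul_pow]
      ring
    calc r + 2 * (p:ℝ) + ∑ k ∈ Finset.range p, ((p - 1 - k : ℕ) : ℝ) * r ^ (k+1) / (Nat.factorial (k+1) : ℝ)
        ≤ (R + 2 * p + ∑ k ∈ Finset.range p, ((p - 1 - k : ℕ) : ℝ) * R ^ (k+1) / (Nat.factorial (k+1) : ℝ)) * u ^ (p+1) := by
          rw [add_mul, add_mul]
          gcongr
      _ < (R ^ (p+1) / (Nat.factorial p : ℝ)) * u ^ (p+1) := h4
      _ = r ^ (p+1) / (Nat.factorial p : ℝ) := h5
  linarith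



lemma geom_sum_bound (n : ℕ) : ∑ k ∈ Finset.range n, (k:ℝ) * (5/6:ℝ) ^ k ≤ 30 := by
  have hs : HasSum (fun k : ℕ => (k:ℝ) * (5/6:ℝ) ^ k) ((5/6) / (1 - 5/6) ^ 2) :=
    hasSum_coe_mul_geometric_of_norm_lt_one (by rw [Real.norm_eq_abs]; rw [abs_of_nonneg] <;> norm_num)
  have h1 : ∑ k ∈ Finset.range n, (k:ℝ) * (5/6:ℝ) ^ k ≤ ∑' k : ℕ, (k:ℝ) * (5/6:ℝ) ^ k :=
    Summable.sum_le_tsum _ (fun i _ => by positivity) hs.summable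
  rw [hs.tsum_eq] at h1
  calc ∑ k ∈ Finset.range n, (k:ℝ) * (5/6:ℝ) ^ k ≤ (5/6) / (1 - 5/6) ^ 2 := h1
    _ = 30 := by norm_num

lemma gen_cond (p : ℕ) (hp : 31 ≤ p) :
    (6*(p:ℝ)/5) + 2 * p + ∑ k ∈ Finset.range p, ((p - 1 - k : ℕ) : ℝ) * (6*(p:ℝ)/5) ^ (k+1) / (Nat.factorial (k+1) : ℝ)
      < (6*(p:ℝ)/5) ^ (p+1) / (Nat.factorial p : ℝ) := by
  set R : ℝ := 6*(p:ℝ)/5 with hRdef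
  have hp0 : (0:ℝ) < p := by
    have : 0 < p := by omega
    exact_mod_cast this
  have hR0 : (0:ℝ) < R := by rw [hRdef]; positivity
  have hfp : (0:ℝ) < (Nat.factorial p : ℝ) := by
    exact_mod_cast Nat.factorial_pos p
  set F : ℝ := R ^ (p+1) / (Nat.factorial p : ℝ) with hFdef
  have hF0 : 0 < F := by rw [hFdef]; positivity
  have hpR : (p:ℝ) / R = 5/6 := by
    rw [hRdef]; field_simp
  -- per-term bound
  have hterm : ∀ k ∈ Finset.range p,
      ((p - 1 - k : ℕ) : ℝ) * R ^ (k+1) / (Nat.factorial (k+1) : ℝ)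
      ≤ F / (p:ℝ) * (((p - 1 - k : ℕ) : ℝ) * (5/6:ℝ) ^ (p - k)) := by
    intro k hk
    rw [Finset.mem_range] at hk
    have hx : ((5:ℝ)/6) ^ (p - k) = (p:ℝ) ^ (p - k) / R ^ (p - k) := by
      rw [← div_pow, hpR]
    have hsplit : R ^ (p+1) = R ^ (k+1) * R ^ (p - k) := by
      rw [← pow_add]
      congr 1
      omega
    have hpsplit : (p:ℝ) ^ (p - k) = (p:ℝ) ^ (p - k - 1) * p := by
      rw [← pow_succ]
      congr 1
      omega
    have hfac : (Nat.factorial p : ℝ) ≤ (Nat.factorial (k+1) : ℝ) * (p:ℝ) ^ (p - k - 1) := by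
      have h := factorial_add_le (k+1) (p - k - 1)
      have he : k + 1 + (p - k - 1) = p := by omega
      rw [he] at h
      exact_mod_cast h
    have hRHS : F / (p:ℝ) * (((p - 1 - k : ℕ) : ℝ) * (5/6:ℝ) ^ (p - k))
        = ((p - 1 - k : ℕ) : ℝ) * R ^ (k+1) * (p:ℝ) ^ (p - k - 1) / (Nat.factorial p : ℝ) := by
      rw [hFdef, hx, hsplit, hpsplit]
      field_simp
    rw [hRHS]
    rw [div_le_div_iff₀ (by exact_mod_cast Nat.factorial_pos (k+1)) hfp]
    have hc0 : (0:ℝ) ≤ ((p - 1 - k : ℕ) : ℝ) := Nat.cast_nonneg _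
    have hr0 : (0:ℝ) ≤ R ^ (k+1) := by positivity
    calc ((p - 1 - k : ℕ) : ℝ) * R ^ (k+1) * (Nat.factorial p : ℝ)
        ≤ ((p - 1 - k : ℕ) : ℝ) * R ^ (k+1) * ((Nat.factorial (k+1) : ℝ) * (p:ℝ) ^ (p - k - 1)) := by
          apply mul_le_mul_of_nonneg_left hfac
          positivity
      _ = ((p - 1 - k : ℕ) : ℝ) * R ^ (k+1) * (p:ℝ) ^ (p - k - 1) * (Nat.factorial (k+1) : ℝ) := by ring
  -- sum bound
  have hsum : ∑ k ∈ Finset.range p, ((p - 1 - k : ℕ) : ℝ) * R ^ (k+1) / (Nat.factorial (k+1) : ℝ)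
      ≤ F / (p:ℝ) * 25 := by
    calc ∑ k ∈ Finset.range p, ((p - 1 - k : ℕ) : ℝ) * R ^ (k+1) / (Nat.factorial (k+1) : ℝ)
        ≤ ∑ k ∈ Finset.range p, F / (p:ℝ) * (((p - 1 - k : ℕ) : ℝ) * (5/6:ℝ) ^ (p - k)) :=
          Finset.sum_le_sum hterm
      _ = F / (p:ℝ) * ∑ k ∈ Finset.range p, (((p - 1 - k : ℕ) : ℝ) * (5/6:ℝ) ^ (p - k)) := by
          rw [Finset.mul_sum]
      _ ≤ F / (p:ℝ) * 25 := by
          apply mul_le_mul_of_nonneg_left _ (by positivity)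
          have hrefl : ∑ k ∈ Finset.range p, (((p - 1 - k : ℕ) : ℝ) * (5/6:ℝ) ^ (p - k))
              = ∑ j ∈ Finset.range p, ((j : ℝ) * (5/6:ℝ) ^ (j + 1)) := by
            rw [← Finset.sum_range_reflect (fun j => ((j : ℝ) * (5/6:ℝ) ^ (j + 1))) p]
            apply Finset.sum_congr rfl
            intro k hk
            rw [Finset.mem_range] at hk
            have h1 : p - 1 - k + 1 = p - k := by omega
            rw [h1]
          rw [hrefl]
          have h2 : ∑ j ∈ Finset.range p, ((j : ℝ) * (5/6:ℝ) ^ (j + 1))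
              = (5/6:ℝ) * ∑ j ∈ Finset.range p, ((j : ℝ) * (5/6:ℝ) ^ j) := by
            rw [Finset.mul_sum]
            apply Finset.sum_congr rfl
            intro j _
            rw [pow_succ]
            ring
          rw [h2]
          have h3 := geom_sum_bound p
          nlinarith [h3]
  -- head bound : R + 2p < 6/31 * F
  have hhead : R + 2 * (p:ℝ) < 6/31 * F := by
    have hFlow : (3*(p:ℝ)/5) * (12/5:ℝ)^p ≤ F := by
      have h1 : (2:ℝ)^(p-1) * (Nat.factorial p : ℝ) ≤ (p:ℝ)^p := two_pow_factorial_le p (by omega)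
      have h3 : R ^ p = (6/5:ℝ)^p * (p:ℝ)^p := by
        rw [hRdef, ← mul_pow]
        congr 1
        ring
      have h4 : (12/5:ℝ)^p = (6/5:ℝ)^p * 2^p := by
        rw [← mul_pow]
        norm_num
      have h5 : (2:ℝ)^p = 2 * 2^(p-1) := by
        conv_lhs => rw [show p = (p-1)+1 by omega]
        rw [pow_succ]
        ring
      rw [hFdef, le_div_iff₀ hfp]
      calc (3*(p:ℝ)/5) * (12/5:ℝ)^p * (Nat.factorial p : ℝ)
          = (6*(p:ℝ)/5) * ((6/5:ℝ)^p * (2^(p-1) * (Nat.factorial p : ℝ))) := by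
            rw [h4, h5]; ring
        _ ≤ (6*(p:ℝ)/5) * ((6/5:ℝ)^p * (p:ℝ)^p) := by
            apply mul_le_mul_of_nonneg_left _ (by positivity)
            apply mul_le_mul_of_nonneg_left h1 (by positivity)
        _ = R ^ (p+1) := by
            rw [pow_succ, h3, hRdef]; ring
    have hgeo : (28:ℝ) ≤ (12/5:ℝ)^p := by
      calc (28:ℝ) ≤ (12/5:ℝ)^4 := by norm_num
        _ ≤ (12/5:ℝ)^p := pow_le_pow_right₀ (by norm_num) (by omega)
    have hmain : R + 2*(p:ℝ) < 6/31 * ((3*(p:ℝ)/5) * (12/5:ℝ)^p) := by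
      rw [hRdef]
      have : 6*(p:ℝ)/5 + 2*(p:ℝ) = 16*(p:ℝ)/5 := by ring
      rw [this]
      nlinarith [hp0, hgeo]
    calc R + 2*(p:ℝ) < 6/31 * ((3*(p:ℝ)/5) * (12/5:ℝ)^p) := hmain
      _ ≤ 6/31 * F := by nlinarith [hFlow]
  -- conclude
  have h25 : F / (p:ℝ) * 25 ≤ 25/31 * F := by
    rw [div_mul_eq_mul_div, div_le_iff₀ hp0]
    have h31 : (31:ℝ) ≤ (p:ℝ) := by exact_mod_cast hp
    nlinarith [hF0]
  calc R + 2 * (p:ℝ) + ∑ k ∈ Finset.range p, ((p - 1 - k : ℕ) : ℝ) * R ^ (k+1) / (Nat.factorial (k+1) : ℝ)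
      ≤ R + 2 * (p:ℝ) + F / (p:ℝ) * 25 := by linarith [hsum]
    _ < 6/31 * F + 25/31 * F := by linarith [hhead, h25]
    _ = F := by ring



-- |1 + z/m| ≤ sqrt(m²+R²)/m under Re z ≤ 0, |z| ≤ R
lemma abs_one_add_div_le (m : ℕ) (hm : 1 ≤ m) (z : ℂ) (hre : z.re ≤ 0)
    (R : ℝ) (hR0 : 0 ≤ R) (hzR : ‖z‖ ≤ R) :
    ‖1 + z / m‖ ≤ Real.sqrt ((m:ℝ)^2 + R^2) / m := by
  have hm0 : (0:ℝ) < m := by exact_mod_cast hm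
  have hmC : (m : ℂ) ≠ 0 := by
    simp only [ne_eq, Nat.cast_eq_zero]
    omega
  have h1 : (1 : ℂ) + z / m = ((m : ℂ) + z) / m := by
    field_simp
  rw [h1, norm_div, Complex.norm_natCast]
  gcongr
  -- |m + z| ≤ sqrt (m² + R²)
  have h2 : ‖(m : ℂ) + z‖ = Real.sqrt (Complex.normSq ((m:ℂ) + z)) :=
    Complex.norm_def _
  rw [h2]
  apply Real.sqrt_le_sqrt
  have h3 : Complex.normSq ((m:ℂ) + z) = ((m:ℝ) + z.re)^2 + z.im^2 := by
    rw [Complex.normSq_apply]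
    simp [Complex.add_re, Complex.add_im, Complex.natCast_re, Complex.natCast_im]
    ring
  rw [h3]
  have h4 : z.re^2 + z.im^2 ≤ R^2 := by
    have h5 : ‖z‖ ^ 2 ≤ R^2 := pow_le_pow_left₀ (norm_nonneg z) hzR 2
    rw [Complex.sq_norm, Complex.normSq_apply] at h5
    nlinarith [h5]
  nlinarith [mul_nonneg (le_of_lt hm0) (neg_nonneg.mpr hre)]

-- reduction : LHS ≤ m^(p-1)/(f1 f2) * B^(m-1)
lemma lhs_le (p m ℓ : ℕ) (hm1 : 1 ≤ m) (hmp : m ≤ p) (hl1 : 1 ≤ ℓ) (hlm : ℓ ≤ m)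
    (z : ℂ) (hre : z.re ≤ 0) (R : ℝ) (hR0 : 0 ≤ R) (hzR : ‖z‖ ≤ R) :
    (m : ℝ) ^ (p - 1) / ((Nat.factorial (p - m) : ℝ) * (Nat.factorial (m - 1) : ℝ)) *
        ‖1 + z / m‖ ^ (ℓ - 1)
      ≤ (m : ℝ) ^ (p - 1) / ((Nat.factorial (p - m) : ℝ) * (Nat.factorial (m - 1) : ℝ)) *
        (Real.sqrt ((m:ℝ)^2 + R^2) / m) ^ (m - 1) := by
  have hm0 : (0:ℝ) < m := by exact_mod_cast hm1
  set B : ℝ := Real.sqrt ((m:ℝ)^2 + R^2) / m with hBdef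
  have hB1 : 1 ≤ B := by
    rw [hBdef, le_div_iff₀ hm0, one_mul]
    have : (m:ℝ) = Real.sqrt ((m:ℝ)^2) := (Real.sqrt_sq (le_of_lt hm0)).symm
    rw [this]
    apply Real.sqrt_le_sqrt
    nlinarith [sq_nonneg R, Real.sq_sqrt (by positivity : (0:ℝ) ≤ (m:ℝ)^2)]
  have habs := abs_one_add_div_le m hm1 z hre R hR0 hzR
  have h6 : ‖1 + z / m‖ ^ (ℓ - 1) ≤ B ^ (ℓ - 1) :=
    pow_le_pow_left₀ (norm_nonneg _) habs _
  have h7 : B ^ (ℓ - 1) ≤ B ^ (m - 1) :=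
    pow_le_pow_right₀ hB1 (by omega)
  have h8 : (0:ℝ) ≤ (m : ℝ) ^ (p - 1) / ((Nat.factorial (p - m) : ℝ) * (Nat.factorial (m - 1) : ℝ)) := by
    positivity
  exact mul_le_mul_of_nonneg_left (le_trans h6 h7) h8

-- numeric key lemma: from rational inequality to conclusion
lemma keyNum (p m ℓ : ℕ) (hp : 3 ≤ p) (hm1 : 1 ≤ m) (hmp : m ≤ p) (hl1 : 1 ≤ ℓ) (hlm : ℓ ≤ m)
    (z : ℂ) (hre : z.re ≤ 0) (R : ℝ) (hR0 : 0 ≤ R) (hzR : ‖z‖ ≤ R)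
    (hnum : ((m:ℝ) ^ (p-1)) ^ 2 * ((m:ℝ)^2 + R^2) ^ (m-1) * (151 * ((p:ℝ) - 1))
      < ((7.01:ℝ) ^ p) ^ 2 * (((m:ℝ)^2) ^ (m-1)) *
        ((Nat.factorial (p - m) : ℝ) * (Nat.factorial (m - 1) : ℝ)) ^ 2) :
    (m : ℝ) ^ (p - 1) / ((Nat.factorial (p - m) : ℝ) * (Nat.factorial (m - 1) : ℝ)) *
        ‖1 + z / m‖ ^ (ℓ - 1) <
      7.01 ^ p / (3.9 * Real.pi * Real.sqrt ((p : ℝ) - 1)) := by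
  have hm0 : (0:ℝ) < m := by exact_mod_cast hm1
  have hp1 : (0:ℝ) < (p:ℝ) - 1 := by
    have : (3:ℝ) ≤ p := by exact_mod_cast hp
    linarith
  have hpi : (0:ℝ) < Real.pi := Real.pi_pos
  have hsq : (0:ℝ) < Real.sqrt ((p:ℝ) - 1) := Real.sqrt_pos.mpr hp1
  have hrhs0 : (0:ℝ) < 7.01 ^ p / (3.9 * Real.pi * Real.sqrt ((p : ℝ) - 1)) := by positivity
  have hf0 : (0:ℝ) < (Nat.factorial (p - m) : ℝ) * (Nat.factorial (m - 1) : ℝ) := by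
    have := Nat.factorial_pos (p - m)
    have := Nat.factorial_pos (m - 1)
    positivity
  refine lt_of_le_of_lt (lhs_le p m ℓ hm1 hmp hl1 hlm z hre R hR0 hzR) ?_
  -- compare squares
  set LB : ℝ := (m : ℝ) ^ (p - 1) / ((Nat.factorial (p - m) : ℝ) * (Nat.factorial (m - 1) : ℝ)) *
      (Real.sqrt ((m:ℝ)^2 + R^2) / m) ^ (m - 1) with hLBdef
  have hLB0 : 0 ≤ LB := by
    rw [hLBdef]
    positivity
  apply lt_of_pow_lt_pow_left₀ 2 (le_of_lt hrhs0)
  have hBsq : ((Real.sqrt ((m:ℝ)^2 + R^2) / m) ^ (m-1)) ^ 2 = (((m:ℝ)^2 + R^2) / (m:ℝ)^2) ^ (m-1) := by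
    rw [← pow_mul, mul_comm (m-1) 2, pow_mul, div_pow,
      Real.sq_sqrt (by positivity : (0:ℝ) ≤ (m:ℝ)^2 + R^2)]
  have hLBsq : LB ^ 2 = ((m:ℝ) ^ (p-1)) ^ 2 * ((m:ℝ)^2 + R^2) ^ (m-1) /
      (((m:ℝ)^2) ^ (m-1) * ((Nat.factorial (p - m) : ℝ) * (Nat.factorial (m - 1) : ℝ)) ^ 2) := by
    rw [hLBdef, mul_pow, hBsq, div_pow, div_pow]
    field_simp
  have hpisq : (3.9 * Real.pi * Real.sqrt ((p:ℝ) - 1)) ^ 2 ≤ 151 * ((p:ℝ) - 1) := by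
    have hpi2 : Real.pi ≤ 3.141593 := le_of_lt Real.pi_lt_d6
    have h1 : (3.9 * Real.pi * Real.sqrt ((p:ℝ) - 1)) ^ 2
        = (3.9 * Real.pi)^2 * ((p:ℝ) - 1) := by
      rw [mul_pow, Real.sq_sqrt (le_of_lt hp1)]
    rw [h1]
    have h2 : (3.9 * Real.pi)^2 ≤ 151 := by nlinarith [hpi]
    nlinarith [hp1]
  have hrhssq : ((7.01:ℝ) ^ p) ^ 2 / (151 * ((p:ℝ)-1))
      ≤ (7.01 ^ p / (3.9 * Real.pi * Real.sqrt ((p : ℝ) - 1))) ^ 2 := by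
    rw [div_pow]
    apply div_le_div_of_nonneg_left (by positivity) (by positivity) hpisq
  have hD0 : (0:ℝ) < ((m:ℝ)^2) ^ (m-1) * ((Nat.factorial (p - m) : ℝ) * (Nat.factorial (m - 1) : ℝ)) ^ 2 := by
    positivity
  calc LB ^ 2 = ((m:ℝ) ^ (p-1)) ^ 2 * ((m:ℝ)^2 + R^2) ^ (m-1) /
        (((m:ℝ)^2) ^ (m-1) * ((Nat.factorial (p - m) : ℝ) * (Nat.factorial (m - 1) : ℝ)) ^ 2) := hLBsq
    _ < ((7.01:ℝ) ^ p) ^ 2 / (151 * ((p:ℝ)-1)) := by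
        rw [div_lt_div_iff₀ hD0 (by positivity)]
        calc ((m:ℝ) ^ (p-1)) ^ 2 * ((m:ℝ)^2 + R^2) ^ (m-1) * (151 * ((p:ℝ) - 1))
            < ((7.01:ℝ) ^ p) ^ 2 * (((m:ℝ)^2) ^ (m-1)) *
              ((Nat.factorial (p - m) : ℝ) * (Nat.factorial (m - 1) : ℝ)) ^ 2 := hnum
          _ = ((7.01:ℝ) ^ p) ^ 2 * (((m:ℝ)^2) ^ (m-1) *
              ((Nat.factorial (p - m) : ℝ) * (Nat.factorial (m - 1) : ℝ)) ^ 2) := by ring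
    _ ≤ (7.01 ^ p / (3.9 * Real.pi * Real.sqrt ((p : ℝ) - 1))) ^ 2 := hrhssq

-- exp numeric bounds
lemma exp_third_le : Real.exp (1/3) ≤ 1.3957 := by
  have h1 : Real.exp (1/3) ^ (3:ℕ) = Real.exp 1 := by
    rw [← Real.exp_nat_mul]
    norm_num
  have h2 : Real.exp 1 ≤ (1.3957:ℝ) ^ (3:ℕ) := by
    have := Real.exp_one_lt_d9
    nlinarith [this]
  refine le_of_pow_le_pow_left₀ (by norm_num : (3:ℕ) ≠ 0) (by norm_num) ?_
  rw [h1]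
  exact h2

lemma exp_811_le : Real.exp (8/11) ≤ 2.07 := by
  have h1 : Real.exp (8/11) ^ (11:ℕ) = Real.exp 1 ^ (8:ℕ) := by
    rw [← Real.exp_nat_mul, ← Real.exp_nat_mul]
    norm_num
  have h2 : Real.exp 1 ^ (8:ℕ) ≤ (2.07:ℝ) ^ (11:ℕ) := by
    have h := Real.exp_one_lt_d9
    have h3 : Real.exp 1 ^ (8:ℕ) ≤ (2.7182818286:ℝ) ^ (8:ℕ) :=
      pow_le_pow_left₀ (le_of_lt (Real.exp_pos 1)) (le_of_lt h) 8
    refine le_trans h3 ?_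
    norm_num
  refine le_of_pow_le_pow_left₀ (by norm_num : (11:ℕ) ≠ 0) (by norm_num) ?_
  rw [h1]
  exact h2

-- sqrt lemma for induction
lemma sq_ind : ∀ p : ℕ, 31 ≤ p → (32.6:ℝ) * ((p:ℝ) - 1) < ((701/621:ℝ) ^ p) ^ 2 := by
  intro p hp
  induction p, hp using Nat.le_induction with
  | base =>
      norm_num
  | succ p hp ih =>
      have hq : ((701/621:ℝ) ^ (p+1)) ^ 2 = ((701/621:ℝ) ^ p) ^ 2 * (701/621:ℝ)^2 := by
        rw [pow_succ]
        ring
      have hstep : (32.6:ℝ) * ((p:ℝ) + 1 - 1) ≤ (32.6:ℝ) * ((p:ℝ) - 1) * (701/621:ℝ)^2 := by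
        have hp31 : (31:ℝ) ≤ (p:ℝ) := by exact_mod_cast hp
        nlinarith [hp31]
      have hc : ((p+1:ℕ):ℝ) = (p:ℝ) + 1 := by push_cast; ring
      rw [hc, hq]
      calc (32.6:ℝ) * ((p:ℝ) + 1 - 1) ≤ (32.6:ℝ) * ((p:ℝ) - 1) * (701/621:ℝ)^2 := hstep
        _ < ((701/621:ℝ) ^ p) ^ 2 * (701/621:ℝ)^2 := mul_lt_mul_of_pos_right ih (by positivity)

set_option maxHeartbeats 2000000 in
lemma keyGen (p m ℓ : ℕ) (hp : 31 ≤ p) (hm1 : 1 ≤ m) (hmp : m ≤ p) (hl1 : 1 ≤ ℓ) (hlm : ℓ ≤ m)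
    (z : ℂ) (hre : z.re ≤ 0) (hzR : ‖z‖ ≤ 6*(p:ℝ)/5) :
    (m : ℝ) ^ (p - 1) / ((Nat.factorial (p - m) : ℝ) * (Nat.factorial (m - 1) : ℝ)) *
        ‖1 + z / m‖ ^ (ℓ - 1) <
      7.01 ^ p / (3.9 * Real.pi * Real.sqrt ((p : ℝ) - 1)) := by
  have hp0 : (0:ℝ) < p := by
    have : 0 < p := by omega
    exact_mod_cast this
  have hm0 : (0:ℝ) < m := by exact_mod_cast hm1
  set R : ℝ := 6*(p:ℝ)/5 with hRdef
  have hR0 : (0:ℝ) ≤ R := by rw [hRdef]; positivity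
  refine lt_of_le_of_lt (lhs_le p m ℓ hm1 hmp hl1 hlm z hre R hR0 hzR) ?_
  set D : ℝ := Real.sqrt ((m:ℝ)^2 + R^2) with hDdef
  have hD0 : 0 ≤ D := Real.sqrt_nonneg _
  have hf1 : (0:ℝ) < (Nat.factorial (p - m) : ℝ) := by exact_mod_cast Nat.factorial_pos _
  have hf2 : (0:ℝ) < (Nat.factorial (m - 1) : ℝ) := by exact_mod_cast Nat.factorial_pos _
  set s : ℝ := Real.exp (1/3) / 3 with hsdef
  have hs0 : 0 < s := by rw [hsdef]; positivity
  -- rewrite bound as product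
  have hpow : (m:ℝ)^(p-1) = (m:ℝ)^(p-m) * (m:ℝ)^(m-1) := by
    rw [← pow_add]
    congr 1
    omega
  have hEq : (m : ℝ) ^ (p - 1) / ((Nat.factorial (p - m) : ℝ) * (Nat.factorial (m - 1) : ℝ)) * (D / m) ^ (m-1)
      = ((m:ℝ)^(p-m) / (Nat.factorial (p - m) : ℝ)) * (D^(m-1) / (Nat.factorial (m - 1) : ℝ)) := by
    rw [div_pow, hpow]
    field_simp
  rw [hEq]
  -- step 1
  have h1 : (m:ℝ)^(p-m) / (Nat.factorial (p - m) : ℝ) ≤ 3^(p-m) * Real.exp ((m:ℝ)/3) := by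
    have h := pow_div_factorial_le_exp ((m:ℝ)/3) (by positivity) (p - m)
    have heq : (m:ℝ)^(p-m) / (Nat.factorial (p - m) : ℝ)
        = 3^(p-m) * (((m:ℝ)/3)^(p-m) / (Nat.factorial (p - m) : ℝ)) := by
      rw [div_pow]
      field_simp
    rw [heq]
    exact mul_le_mul_of_nonneg_left h (by positivity)
  -- step 2
  have h2 : D^(m-1) / (Nat.factorial (m - 1) : ℝ) ≤ Real.exp (D*s) / s^(m-1) := by
    have h := pow_div_factorial_le_exp (D*s) (by positivity) (m - 1)
    rw [mul_pow] at h
    have heq : D^(m-1) / (Nat.factorial (m - 1) : ℝ)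
        = (D^(m-1) * s^(m-1) / (Nat.factorial (m - 1) : ℝ)) / s^(m-1) := by
      field_simp
    rw [heq]
    gcongr
  -- combine
  have h3 : ((m:ℝ)^(p-m) / (Nat.factorial (p - m) : ℝ)) * (D^(m-1) / (Nat.factorial (m - 1) : ℝ))
      ≤ (3^(p-m) * Real.exp ((m:ℝ)/3)) * (Real.exp (D*s) / s^(m-1)) := by
    apply mul_le_mul h1 h2 (by positivity) (by positivity)
  -- simplify exponentials
  have hcast : ((m-1:ℕ):ℝ) = (m:ℝ) - 1 := by
    have : 1 ≤ m := hm1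
    push_cast [Nat.cast_sub this]
    ring
  have hsm : s^(m-1) = Real.exp (((m:ℝ)-1)/3) / 3^(m-1) := by
    rw [hsdef, div_pow, ← Real.exp_nat_mul]
    congr 2
    rw [hcast]
    ring
  have h4 : (3^(p-m) * Real.exp ((m:ℝ)/3)) * (Real.exp (D*s) / s^(m-1))
      = 3^(p-1) * Real.exp (1/3) * Real.exp (D*s) := by
    rw [hsm]
    have he : (m:ℝ)/3 - ((m:ℝ)-1)/3 = 1/3 := by ring
    have hp3 : (3:ℝ)^(p-m) * 3^(m-1) = 3^(p-1) := by
      rw [← pow_add]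
      congr 1
      omega
    have hne : Real.exp (((m:ℝ)-1)/3) ≠ 0 := Real.exp_ne_zero _
    calc (3^(p-m) * Real.exp ((m:ℝ)/3)) * (Real.exp (D*s) / (Real.exp (((m:ℝ)-1)/3) / 3^(m-1)))
        = (3^(p-m) * 3^(m-1)) * (Real.exp ((m:ℝ)/3) / Real.exp (((m:ℝ)-1)/3)) * Real.exp (D*s) := by
          field_simp
      _ = 3^(p-1) * Real.exp (1/3) * Real.exp (D*s) := by
          rw [hp3, ← Real.exp_sub, he]
  -- bound D*s
  have hD : D ≤ (78103/50000:ℝ) * p := by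
    rw [hDdef]
    have h5 : (m:ℝ)^2 + R^2 ≤ ((78103/50000:ℝ) * p)^2 := by
      rw [hRdef]
      have hmp' : (m:ℝ) ≤ p := by exact_mod_cast hmp
      nlinarith [hp0, hmp', hm0]
    calc Real.sqrt ((m:ℝ)^2 + R^2) ≤ Real.sqrt (((78103/50000:ℝ) * p)^2) := Real.sqrt_le_sqrt h5
      _ = (78103/50000:ℝ) * p := Real.sqrt_sq (by positivity)
  have hsle : s ≤ 1.3957/3 := by
    rw [hsdef]
    have := exp_third_le
    linarith
  have hDs : D * s ≤ 8/11 * p := by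
    calc D * s ≤ ((78103/50000:ℝ) * p) * (1.3957/3) := by
          apply mul_le_mul hD hsle (le_of_lt hs0) (by positivity)
      _ = (p:ℝ) * ((78103/50000) * (1.3957/3)) := by ring
      _ ≤ (p:ℝ) * (8/11) := by
          apply mul_le_mul_of_nonneg_left (by norm_num) (le_of_lt hp0)
      _ = 8/11 * p := by ring
  have h6 : Real.exp (D*s) ≤ (2.07:ℝ)^p := by
    calc Real.exp (D*s) ≤ Real.exp (8/11 * p) := Real.exp_le_exp.mpr hDs
      _ = Real.exp (8/11) ^ p := by
          rw [← Real.exp_nat_mul]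
          congr 1
          ring
      _ ≤ (2.07:ℝ)^p := pow_le_pow_left₀ (le_of_lt (Real.exp_pos _)) exp_811_le p
  -- final numeric comparison
  have hp1 : (0:ℝ) < (p:ℝ) - 1 := by
    have : (31:ℝ) ≤ (p:ℝ) := by exact_mod_cast hp
    linarith
  have hsq0 : (0:ℝ) < Real.sqrt ((p:ℝ) - 1) := Real.sqrt_pos.mpr hp1
  have hfinal : 3^(p-1) * Real.exp (1/3) * (2.07:ℝ)^p < 7.01 ^ p / (3.9 * Real.pi * Real.sqrt ((p : ℝ) - 1)) := by
    rw [lt_div_iff₀ (by positivity)]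
    have hq : (5.701:ℝ) * Real.sqrt ((p:ℝ)-1) < (701/621:ℝ)^p := by
      have hsi := sq_ind p hp
      have hq2 : ((5.701:ℝ) * Real.sqrt ((p:ℝ)-1))^2 < (((701/621:ℝ))^p)^2 := by
        rw [mul_pow, Real.sq_sqrt (le_of_lt hp1)]
        calc (5.701:ℝ)^2 * ((p:ℝ)-1) ≤ 32.6 * ((p:ℝ)-1) := by
              apply mul_le_mul_of_nonneg_right (by norm_num) (le_of_lt hp1)
          _ < (((701/621:ℝ))^p)^2 := hsi
      exact lt_of_pow_lt_pow_left₀ 2 (by positivity) hq2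
    have hpi : Real.pi < 3.141593 := Real.pi_lt_d6
    have hexp13 : Real.exp (1/3) ≤ 1.3957 := exp_third_le
    have h30 : (0:ℝ) < 3^(p-1) * (2.07:ℝ)^p := by positivity
    calc 3^(p-1) * Real.exp (1/3) * (2.07:ℝ)^p * (3.9 * Real.pi * Real.sqrt ((p : ℝ) - 1))
        ≤ 3^(p-1) * (2.07:ℝ)^p * (3 * (5.701 * Real.sqrt ((p:ℝ)-1))) := by
          have hc : Real.exp (1/3) * (3.9 * Real.pi) ≤ 3 * 5.701 := by nlinarith [Real.exp_pos (1/3:ℝ), Real.pi_gt_three, hexp13, hpi]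
          have hs2 : (0:ℝ) ≤ Real.sqrt ((p:ℝ)-1) := le_of_lt hsq0
          calc 3^(p-1) * Real.exp (1/3) * (2.07:ℝ)^p * (3.9 * Real.pi * Real.sqrt ((p : ℝ) - 1))
              = (3^(p-1) * (2.07:ℝ)^p) * ((Real.exp (1/3) * (3.9 * Real.pi)) * Real.sqrt ((p:ℝ)-1)) := by ring
            _ ≤ (3^(p-1) * (2.07:ℝ)^p) * ((3 * 5.701) * Real.sqrt ((p:ℝ)-1)) := by
                apply mul_le_mul_of_nonneg_left _ (le_of_lt h30)
                apply mul_le_mul_of_nonneg_right hc hs2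
            _ = 3^(p-1) * (2.07:ℝ)^p * (3 * (5.701 * Real.sqrt ((p:ℝ)-1))) := by ring
      _ < 3^(p-1) * (2.07:ℝ)^p * (3 * (701/621:ℝ)^p) := by
          have h31 : (0:ℝ) < 3 := by norm_num
          exact mul_lt_mul_of_pos_left ((mul_lt_mul_iff_right₀ h31).mpr hq) h30
      _ = (3:ℝ)^p * (2.07:ℝ)^p * (701/621:ℝ)^p := by
          have h32 : (3:ℝ)^(p-1) * 3 = 3^p := by
            rw [← pow_succ]
            congr 1
            omega
          calc 3^(p-1) * (2.07:ℝ)^p * (3 * (701/621:ℝ)^p) = (3^(p-1) * 3) * (2.07:ℝ)^p * (701/621:ℝ)^p := by ring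
            _ = (3:ℝ)^p * (2.07:ℝ)^p * (701/621:ℝ)^p := by rw [h32]
      _ = (7.01:ℝ)^p := by
          rw [← mul_pow, ← mul_pow]
          norm_num
  calc ((m:ℝ)^(p-m) / (Nat.factorial (p - m) : ℝ)) * (D^(m-1) / (Nat.factorial (m - 1) : ℝ))
      ≤ (3^(p-m) * Real.exp ((m:ℝ)/3)) * (Real.exp (D*s) / s^(m-1)) := h3
    _ = 3^(p-1) * Real.exp (1/3) * Real.exp (D*s) := h4
    _ ≤ 3^(p-1) * Real.exp (1/3) * (2.07:ℝ)^p := by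
        apply mul_le_mul_of_nonneg_left h6 (by positivity)
    _ < 7.01 ^ p / (3.9 * Real.pi * Real.sqrt ((p : ℝ) - 1)) := hfinal



lemma case3 (m ℓ : ℕ) (hm1 : 1 ≤ m) (hmp : m ≤ 3) (hl1 : 1 ≤ ℓ) (hlm : ℓ ≤ m)
    (z : ℂ) (hre : z.re ≤ 0)
    (hz : ‖∑ k ∈ Finset.range (3 + 1), z ^ k / (Nat.factorial k : ℂ)‖ ≤ 1) :
    (m : ℝ) ^ (3 - 1) / ((Nat.factorial (3 - m) : ℝ) * (Nat.factorial (m - 1) : ℝ)) *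
        ‖1 + z / m‖ ^ (ℓ - 1) <
      7.01 ^ 3 / (3.9 * Real.pi * Real.sqrt ((3 : ℝ) - 1)) := by
  have hr : ‖z‖ ≤ (17/5 : ℝ) := by
    apply abs_le_of_cond 3 (by norm_num) z hz (17/5 : ℝ) (by norm_num)
    norm_num [Finset.sum_range_succ, Nat.factorial]
  interval_cases m <;>
    exact keyNum 3 _ ℓ (by norm_num) (by norm_num) (by norm_num) hl1 hlm z hre (17/5 : ℝ)
      (by norm_num) hr (by norm_num [Nat.factorial])

lemma case4 (m ℓ : ℕ) (hm1 : 1 ≤ m) (hmp : m ≤ 4) (hl1 : 1 ≤ ℓ) (hlm : ℓ ≤ m)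
    (z : ℂ) (hre : z.re ≤ 0)
    (hz : ‖∑ k ∈ Finset.range (4 + 1), z ^ k / (Nat.factorial k : ℂ)‖ ≤ 1) :
    (m : ℝ) ^ (4 - 1) / ((Nat.factorial (4 - m) : ℝ) * (Nat.factorial (m - 1) : ℝ)) *
        ‖1 + z / m‖ ^ (ℓ - 1) <
      7.01 ^ 4 / (3.9 * Real.pi * Real.sqrt ((4 : ℝ) - 1)) := by
  have hr : ‖z‖ ≤ (211/50 : ℝ) := by
    apply abs_le_of_cond 4 (by norm_num) z hz (211/50 : ℝ) (by norm_num)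
    norm_num [Finset.sum_range_succ, Nat.factorial]
  interval_cases m <;>
    exact keyNum 4 _ ℓ (by norm_num) (by norm_num) (by norm_num) hl1 hlm z hre (211/50 : ℝ)
      (by norm_num) hr (by norm_num [Nat.factorial])

lemma case5 (m ℓ : ℕ) (hm1 : 1 ≤ m) (hmp : m ≤ 5) (hl1 : 1 ≤ ℓ) (hlm : ℓ ≤ m)
    (z : ℂ) (hre : z.re ≤ 0)
    (hz : ‖∑ k ∈ Finset.range (5 + 1), z ^ k / (Nat.factorial k : ℂ)‖ ≤ 1) :
    (m : ℝ) ^ (5 - 1) / ((Nat.factorial (5 - m) : ℝ) * (Nat.factorial (m - 1) : ℝ)) *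
        ‖1 + z / m‖ ^ (ℓ - 1) <
      7.01 ^ 5 / (3.9 * Real.pi * Real.sqrt ((5 : ℝ) - 1)) := by
  have hr : ‖z‖ ≤ (128/25 : ℝ) := by
    apply abs_le_of_cond 5 (by norm_num) z hz (128/25 : ℝ) (by norm_num)
    norm_num [Finset.sum_range_succ, Nat.factorial]
  interval_cases m <;>
    exact keyNum 5 _ ℓ (by norm_num) (by norm_num) (by norm_num) hl1 hlm z hre (128/25 : ℝ)
      (by norm_num) hr (by norm_num [Nat.factorial])

lemma case6 (m ℓ : ℕ) (hm1 : 1 ≤ m) (hmp : m ≤ 6) (hl1 : 1 ≤ ℓ) (hlm : ℓ ≤ m)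
    (z : ℂ) (hre : z.re ≤ 0)
    (hz : ‖∑ k ∈ Finset.range (6 + 1), z ^ k / (Nat.factorial k : ℂ)‖ ≤ 1) :
    (m : ℝ) ^ (6 - 1) / ((Nat.factorial (6 - m) : ℝ) * (Nat.factorial (m - 1) : ℝ)) *
        ‖1 + z / m‖ ^ (ℓ - 1) <
      7.01 ^ 6 / (3.9 * Real.pi * Real.sqrt ((6 : ℝ) - 1)) := by
  have hr : ‖z‖ ≤ (303/50 : ℝ) := by
    apply abs_le_of_cond 6 (by norm_num) z hz (303/50 : ℝ) (by norm_num)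
    norm_num [Finset.sum_range_succ, Nat.factorial]
  interval_cases m <;>
    exact keyNum 6 _ ℓ (by norm_num) (by norm_num) (by norm_num) hl1 hlm z hre (303/50 : ℝ)
      (by norm_num) hr (by norm_num [Nat.factorial])

lemma case7 (m ℓ : ℕ) (hm1 : 1 ≤ m) (hmp : m ≤ 7) (hl1 : 1 ≤ ℓ) (hlm : ℓ ≤ m)
    (z : ℂ) (hre : z.re ≤ 0)
    (hz : ‖∑ k ∈ Finset.range (7 + 1), z ^ k / (Nat.factorial k : ℂ)‖ ≤ 1) :
    (m : ℝ) ^ (7 - 1) / ((Nat.factorial (7 - m) : ℝ) * (Nat.factorial (m - 1) : ℝ)) *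
        ‖1 + z / m‖ ^ (ℓ - 1) <
      7.01 ^ 7 / (3.9 * Real.pi * Real.sqrt ((7 : ℝ) - 1)) := by
  have hr : ‖z‖ ≤ (176/25 : ℝ) := by
    apply abs_le_of_cond 7 (by norm_num) z hz (176/25 : ℝ) (by norm_num)
    norm_num [Finset.sum_range_succ, Nat.factorial]
  interval_cases m <;>
    exact keyNum 7 _ ℓ (by norm_num) (by norm_num) (by norm_num) hl1 hlm z hre (176/25 : ℝ)
      (by norm_num) hr (by norm_num [Nat.factorial])

lemma case8 (m ℓ : ℕ) (hm1 : 1 ≤ m) (hmp : m ≤ 8) (hl1 : 1 ≤ ℓ) (hlm : ℓ ≤ m)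
    (z : ℂ) (hre : z.re ≤ 0)
    (hz : ‖∑ k ∈ Finset.range (8 + 1), z ^ k / (Nat.factorial k : ℂ)‖ ≤ 1) :
    (m : ℝ) ^ (8 - 1) / ((Nat.factorial (8 - m) : ℝ) * (Nat.factorial (m - 1) : ℝ)) *
        ‖1 + z / m‖ ^ (ℓ - 1) <
      7.01 ^ 8 / (3.9 * Real.pi * Real.sqrt ((8 : ℝ) - 1)) := by
  have hr : ‖z‖ ≤ (401/50 : ℝ) := by
    apply abs_le_of_cond 8 (by norm_num) z hz (401/50 : ℝ) (by norm_num)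
    norm_num [Finset.sum_range_succ, Nat.factorial]
  interval_cases m <;>
    exact keyNum 8 _ ℓ (by norm_num) (by norm_num) (by norm_num) hl1 hlm z hre (401/50 : ℝ)
      (by norm_num) hr (by norm_num [Nat.factorial])

lemma case9 (m ℓ : ℕ) (hm1 : 1 ≤ m) (hmp : m ≤ 9) (hl1 : 1 ≤ ℓ) (hlm : ℓ ≤ m)
    (z : ℂ) (hre : z.re ≤ 0)
    (hz : ‖∑ k ∈ Finset.range (9 + 1), z ^ k / (Nat.factorial k : ℂ)‖ ≤ 1) :
    (m : ℝ) ^ (9 - 1) / ((Nat.factorial (9 - m) : ℝ) * (Nat.factorial (m - 1) : ℝ)) *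
        ‖1 + z / m‖ ^ (ℓ - 1) <
      7.01 ^ 9 / (3.9 * Real.pi * Real.sqrt ((9 : ℝ) - 1)) := by
  have hr : ‖z‖ ≤ (451/50 : ℝ) := by
    apply abs_le_of_cond 9 (by norm_num) z hz (451/50 : ℝ) (by norm_num)
    norm_num [Finset.sum_range_succ, Nat.factorial]
  interval_cases m <;>
    exact keyNum 9 _ ℓ (by norm_num) (by norm_num) (by norm_num) hl1 hlm z hre (451/50 : ℝ)
      (by norm_num) hr (by norm_num [Nat.factorial])

lemma case10 (m ℓ : ℕ) (hm1 : 1 ≤ m) (hmp : m ≤ 10) (hl1 : 1 ≤ ℓ) (hlm : ℓ ≤ m)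
    (z : ℂ) (hre : z.re ≤ 0)
    (hz : ‖∑ k ∈ Finset.range (10 + 1), z ^ k / (Nat.factorial k : ℂ)‖ ≤ 1) :
    (m : ℝ) ^ (10 - 1) / ((Nat.factorial (10 - m) : ℝ) * (Nat.factorial (m - 1) : ℝ)) *
        ‖1 + z / m‖ ^ (ℓ - 1) <
      7.01 ^ 10 / (3.9 * Real.pi * Real.sqrt ((10 : ℝ) - 1)) := by
  have hr : ‖z‖ ≤ (501/50 : ℝ) := by
    apply abs_le_of_cond 10 (by norm_num) z hz (501/50 : ℝ) (by norm_num)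
    norm_num [Finset.sum_range_succ, Nat.factorial]
  interval_cases m <;>
    exact keyNum 10 _ ℓ (by norm_num) (by norm_num) (by norm_num) hl1 hlm z hre (501/50 : ℝ)
      (by norm_num) hr (by norm_num [Nat.factorial])

lemma case11 (m ℓ : ℕ) (hm1 : 1 ≤ m) (hmp : m ≤ 11) (hl1 : 1 ≤ ℓ) (hlm : ℓ ≤ m)
    (z : ℂ) (hre : z.re ≤ 0)
    (hz : ‖∑ k ∈ Finset.range (11 + 1), z ^ k / (Nat.factorial k : ℂ)‖ ≤ 1) :
    (m : ℝ) ^ (11 - 1) / ((Nat.factorial (11 - m) : ℝ) * (Nat.factorial (m - 1) : ℝ)) *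
        ‖1 + z / m‖ ^ (ℓ - 1) <
      7.01 ^ 11 / (3.9 * Real.pi * Real.sqrt ((11 : ℝ) - 1)) := by
  have hr : ‖z‖ ≤ (551/50 : ℝ) := by
    apply abs_le_of_cond 11 (by norm_num) z hz (551/50 : ℝ) (by norm_num)
    norm_num [Finset.sum_range_succ, Nat.factorial]
  interval_cases m <;>
    exact keyNum 11 _ ℓ (by norm_num) (by norm_num) (by norm_num) hl1 hlm z hre (551/50 : ℝ)
      (by norm_num) hr (by norm_num [Nat.factorial])

lemma case12 (m ℓ : ℕ) (hm1 : 1 ≤ m) (hmp : m ≤ 12) (hl1 : 1 ≤ ℓ) (hlm : ℓ ≤ m)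
    (z : ℂ) (hre : z.re ≤ 0)
    (hz : ‖∑ k ∈ Finset.range (12 + 1), z ^ k / (Nat.factorial k : ℂ)‖ ≤ 1) :
    (m : ℝ) ^ (12 - 1) / ((Nat.factorial (12 - m) : ℝ) * (Nat.factorial (m - 1) : ℝ)) *
        ‖1 + z / m‖ ^ (ℓ - 1) <
      7.01 ^ 12 / (3.9 * Real.pi * Real.sqrt ((12 : ℝ) - 1)) := by
  have hr : ‖z‖ ≤ (601/50 : ℝ) := by
    apply abs_le_of_cond 12 (by norm_num) z hz (601/50 : ℝ) (by norm_num)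
    norm_num [Finset.sum_range_succ, Nat.factorial]
  interval_cases m <;>
    exact keyNum 12 _ ℓ (by norm_num) (by norm_num) (by norm_num) hl1 hlm z hre (601/50 : ℝ)
      (by norm_num) hr (by norm_num [Nat.factorial])

lemma case13 (m ℓ : ℕ) (hm1 : 1 ≤ m) (hmp : m ≤ 13) (hl1 : 1 ≤ ℓ) (hlm : ℓ ≤ m)
    (z : ℂ) (hre : z.re ≤ 0)
    (hz : ‖∑ k ∈ Finset.range (13 + 1), z ^ k / (Nat.factorial k : ℂ)‖ ≤ 1) :
    (m : ℝ) ^ (13 - 1) / ((Nat.factorial (13 - m) : ℝ) * (Nat.factorial (m - 1) : ℝ)) *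
        ‖1 + z / m‖ ^ (ℓ - 1) <
      7.01 ^ 13 / (3.9 * Real.pi * Real.sqrt ((13 : ℝ) - 1)) := by
  have hr : ‖z‖ ≤ (651/50 : ℝ) := by
    apply abs_le_of_cond 13 (by norm_num) z hz (651/50 : ℝ) (by norm_num)
    norm_num [Finset.sum_range_succ, Nat.factorial]
  interval_cases m <;>
    exact keyNum 13 _ ℓ (by norm_num) (by norm_num) (by norm_num) hl1 hlm z hre (651/50 : ℝ)
      (by norm_num) hr (by norm_num [Nat.factorial])

lemma case14 (m ℓ : ℕ) (hm1 : 1 ≤ m) (hmp : m ≤ 14) (hl1 : 1 ≤ ℓ) (hlm : ℓ ≤ m)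
    (z : ℂ) (hre : z.re ≤ 0)
    (hz : ‖∑ k ∈ Finset.range (14 + 1), z ^ k / (Nat.factorial k : ℂ)‖ ≤ 1) :
    (m : ℝ) ^ (14 - 1) / ((Nat.factorial (14 - m) : ℝ) * (Nat.factorial (m - 1) : ℝ)) *
        ‖1 + z / m‖ ^ (ℓ - 1) <
      7.01 ^ 14 / (3.9 * Real.pi * Real.sqrt ((14 : ℝ) - 1)) := by
  have hr : ‖z‖ ≤ (701/50 : ℝ) := by
    apply abs_le_of_cond 14 (by norm_num) z hz (701/50 : ℝ) (by norm_num)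
    norm_num [Finset.sum_range_succ, Nat.factorial]
  interval_cases m <;>
    exact keyNum 14 _ ℓ (by norm_num) (by norm_num) (by norm_num) hl1 hlm z hre (701/50 : ℝ)
      (by norm_num) hr (by norm_num [Nat.factorial])

lemma case15 (m ℓ : ℕ) (hm1 : 1 ≤ m) (hmp : m ≤ 15) (hl1 : 1 ≤ ℓ) (hlm : ℓ ≤ m)
    (z : ℂ) (hre : z.re ≤ 0)
    (hz : ‖∑ k ∈ Finset.range (15 + 1), z ^ k / (Nat.factorial k : ℂ)‖ ≤ 1) :
    (m : ℝ) ^ (15 - 1) / ((Nat.factorial (15 - m) : ℝ) * (Nat.factorial (m - 1) : ℝ)) *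
        ‖1 + z / m‖ ^ (ℓ - 1) <
      7.01 ^ 15 / (3.9 * Real.pi * Real.sqrt ((15 : ℝ) - 1)) := by
  have hr : ‖z‖ ≤ (751/50 : ℝ) := by
    apply abs_le_of_cond 15 (by norm_num) z hz (751/50 : ℝ) (by norm_num)
    norm_num [Finset.sum_range_succ, Nat.factorial]
  interval_cases m <;>
    exact keyNum 15 _ ℓ (by norm_num) (by norm_num) (by norm_num) hl1 hlm z hre (751/50 : ℝ)
      (by norm_num) hr (by norm_num [Nat.factorial])

lemma case16 (m ℓ : ℕ) (hm1 : 1 ≤ m) (hmp : m ≤ 16) (hl1 : 1 ≤ ℓ) (hlm : ℓ ≤ m)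
    (z : ℂ) (hre : z.re ≤ 0)
    (hz : ‖∑ k ∈ Finset.range (16 + 1), z ^ k / (Nat.factorial k : ℂ)‖ ≤ 1) :
    (m : ℝ) ^ (16 - 1) / ((Nat.factorial (16 - m) : ℝ) * (Nat.factorial (m - 1) : ℝ)) *
        ‖1 + z / m‖ ^ (ℓ - 1) <
      7.01 ^ 16 / (3.9 * Real.pi * Real.sqrt ((16 : ℝ) - 1)) := by
  have hr : ‖z‖ ≤ (801/50 : ℝ) := by
    apply abs_le_of_cond 16 (by norm_num) z hz (801/50 : ℝ) (by norm_num)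
    norm_num [Finset.sum_range_succ, Nat.factorial]
  interval_cases m <;>
    exact keyNum 16 _ ℓ (by norm_num) (by norm_num) (by norm_num) hl1 hlm z hre (801/50 : ℝ)
      (by norm_num) hr (by norm_num [Nat.factorial])

lemma case17 (m ℓ : ℕ) (hm1 : 1 ≤ m) (hmp : m ≤ 17) (hl1 : 1 ≤ ℓ) (hlm : ℓ ≤ m)
    (z : ℂ) (hre : z.re ≤ 0)
    (hz : ‖∑ k ∈ Finset.range (17 + 1), z ^ k / (Nat.factorial k : ℂ)‖ ≤ 1) :
    (m : ℝ) ^ (17 - 1) / ((Nat.factorial (17 - m) : ℝ) * (Nat.factorial (m - 1) : ℝ)) *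
        ‖1 + z / m‖ ^ (ℓ - 1) <
      7.01 ^ 17 / (3.9 * Real.pi * Real.sqrt ((17 : ℝ) - 1)) := by
  have hr : ‖z‖ ≤ (851/50 : ℝ) := by
    apply abs_le_of_cond 17 (by norm_num) z hz (851/50 : ℝ) (by norm_num)
    norm_num [Finset.sum_range_succ, Nat.factorial]
  interval_cases m <;>
    exact keyNum 17 _ ℓ (by norm_num) (by norm_num) (by norm_num) hl1 hlm z hre (851/50 : ℝ)
      (by norm_num) hr (by norm_num [Nat.factorial])

lemma case18 (m ℓ : ℕ) (hm1 : 1 ≤ m) (hmp : m ≤ 18) (hl1 : 1 ≤ ℓ) (hlm : ℓ ≤ m)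
    (z : ℂ) (hre : z.re ≤ 0)
    (hz : ‖∑ k ∈ Finset.range (18 + 1), z ^ k / (Nat.factorial k : ℂ)‖ ≤ 1) :
    (m : ℝ) ^ (18 - 1) / ((Nat.factorial (18 - m) : ℝ) * (Nat.factorial (m - 1) : ℝ)) *
        ‖1 + z / m‖ ^ (ℓ - 1) <
      7.01 ^ 18 / (3.9 * Real.pi * Real.sqrt ((18 : ℝ) - 1)) := by
  have hr : ‖z‖ ≤ (901/50 : ℝ) := by
    apply abs_le_of_cond 18 (by norm_num) z hz (901/50 : ℝ) (by norm_num)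
    norm_num [Finset.sum_range_succ, Nat.factorial]
  interval_cases m <;>
    exact keyNum 18 _ ℓ (by norm_num) (by norm_num) (by norm_num) hl1 hlm z hre (901/50 : ℝ)
      (by norm_num) hr (by norm_num [Nat.factorial])

lemma case19 (m ℓ : ℕ) (hm1 : 1 ≤ m) (hmp : m ≤ 19) (hl1 : 1 ≤ ℓ) (hlm : ℓ ≤ m)
    (z : ℂ) (hre : z.re ≤ 0)
    (hz : ‖∑ k ∈ Finset.range (19 + 1), z ^ k / (Nat.factorial k : ℂ)‖ ≤ 1) :
    (m : ℝ) ^ (19 - 1) / ((Nat.factorial (19 - m) : ℝ) * (Nat.factorial (m - 1) : ℝ)) *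
        ‖1 + z / m‖ ^ (ℓ - 1) <
      7.01 ^ 19 / (3.9 * Real.pi * Real.sqrt ((19 : ℝ) - 1)) := by
  have hr : ‖z‖ ≤ (951/50 : ℝ) := by
    apply abs_le_of_cond 19 (by norm_num) z hz (951/50 : ℝ) (by norm_num)
    norm_num [Finset.sum_range_succ, Nat.factorial]
  interval_cases m <;>
    exact keyNum 19 _ ℓ (by norm_num) (by norm_num) (by norm_num) hl1 hlm z hre (951/50 : ℝ)
      (by norm_num) hr (by norm_num [Nat.factorial])

lemma case20 (m ℓ : ℕ) (hm1 : 1 ≤ m) (hmp : m ≤ 20) (hl1 : 1 ≤ ℓ) (hlm : ℓ ≤ m)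
    (z : ℂ) (hre : z.re ≤ 0)
    (hz : ‖∑ k ∈ Finset.range (20 + 1), z ^ k / (Nat.factorial k : ℂ)‖ ≤ 1) :
    (m : ℝ) ^ (20 - 1) / ((Nat.factorial (20 - m) : ℝ) * (Nat.factorial (m - 1) : ℝ)) *
        ‖1 + z / m‖ ^ (ℓ - 1) <
      7.01 ^ 20 / (3.9 * Real.pi * Real.sqrt ((20 : ℝ) - 1)) := by
  have hr : ‖z‖ ≤ (1001/50 : ℝ) := by
    apply abs_le_of_cond 20 (by norm_num) z hz (1001/50 : ℝ) (by norm_num)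
    norm_num [Finset.sum_range_succ, Nat.factorial]
  interval_cases m <;>
    exact keyNum 20 _ ℓ (by norm_num) (by norm_num) (by norm_num) hl1 hlm z hre (1001/50 : ℝ)
      (by norm_num) hr (by norm_num [Nat.factorial])

lemma case21 (m ℓ : ℕ) (hm1 : 1 ≤ m) (hmp : m ≤ 21) (hl1 : 1 ≤ ℓ) (hlm : ℓ ≤ m)
    (z : ℂ) (hre : z.re ≤ 0)
    (hz : ‖∑ k ∈ Finset.range (21 + 1), z ^ k / (Nat.factorial k : ℂ)‖ ≤ 1) :
    (m : ℝ) ^ (21 - 1) / ((Nat.factorial (21 - m) : ℝ) * (Nat.factorial (m - 1) : ℝ)) *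
        ‖1 + z / m‖ ^ (ℓ - 1) <
      7.01 ^ 21 / (3.9 * Real.pi * Real.sqrt ((21 : ℝ) - 1)) := by
  have hr : ‖z‖ ≤ (1051/50 : ℝ) := by
    apply abs_le_of_cond 21 (by norm_num) z hz (1051/50 : ℝ) (by norm_num)
    norm_num [Finset.sum_range_succ, Nat.factorial]
  interval_cases m <;>
    exact keyNum 21 _ ℓ (by norm_num) (by norm_num) (by norm_num) hl1 hlm z hre (1051/50 : ℝ)
      (by norm_num) hr (by norm_num [Nat.factorial])

lemma case22 (m ℓ : ℕ) (hm1 : 1 ≤ m) (hmp : m ≤ 22) (hl1 : 1 ≤ ℓ) (hlm : ℓ ≤ m)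
    (z : ℂ) (hre : z.re ≤ 0)
    (hz : ‖∑ k ∈ Finset.range (22 + 1), z ^ k / (Nat.factorial k : ℂ)‖ ≤ 1) :
    (m : ℝ) ^ (22 - 1) / ((Nat.factorial (22 - m) : ℝ) * (Nat.factorial (m - 1) : ℝ)) *
        ‖1 + z / m‖ ^ (ℓ - 1) <
      7.01 ^ 22 / (3.9 * Real.pi * Real.sqrt ((22 : ℝ) - 1)) := by
  have hr : ‖z‖ ≤ (1101/50 : ℝ) := by
    apply abs_le_of_cond 22 (by norm_num) z hz (1101/50 : ℝ) (by norm_num)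
    norm_num [Finset.sum_range_succ, Nat.factorial]
  interval_cases m <;>
    exact keyNum 22 _ ℓ (by norm_num) (by norm_num) (by norm_num) hl1 hlm z hre (1101/50 : ℝ)
      (by norm_num) hr (by norm_num [Nat.factorial])

lemma case23 (m ℓ : ℕ) (hm1 : 1 ≤ m) (hmp : m ≤ 23) (hl1 : 1 ≤ ℓ) (hlm : ℓ ≤ m)
    (z : ℂ) (hre : z.re ≤ 0)
    (hz : ‖∑ k ∈ Finset.range (23 + 1), z ^ k / (Nat.factorial k : ℂ)‖ ≤ 1) :
    (m : ℝ) ^ (23 - 1) / ((Nat.factorial (23 - m) : ℝ) * (Nat.factorial (m - 1) : ℝ)) *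
        ‖1 + z / m‖ ^ (ℓ - 1) <
      7.01 ^ 23 / (3.9 * Real.pi * Real.sqrt ((23 : ℝ) - 1)) := by
  have hr : ‖z‖ ≤ (1151/50 : ℝ) := by
    apply abs_le_of_cond 23 (by norm_num) z hz (1151/50 : ℝ) (by norm_num)
    norm_num [Finset.sum_range_succ, Nat.factorial]
  interval_cases m <;>
    exact keyNum 23 _ ℓ (by norm_num) (by norm_num) (by norm_num) hl1 hlm z hre (1151/50 : ℝ)
      (by norm_num) hr (by norm_num [Nat.factorial])

lemma case24 (m ℓ : ℕ) (hm1 : 1 ≤ m) (hmp : m ≤ 24) (hl1 : 1 ≤ ℓ) (hlm : ℓ ≤ m)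
    (z : ℂ) (hre : z.re ≤ 0)
    (hz : ‖∑ k ∈ Finset.range (24 + 1), z ^ k / (Nat.factorial k : ℂ)‖ ≤ 1) :
    (m : ℝ) ^ (24 - 1) / ((Nat.factorial (24 - m) : ℝ) * (Nat.factorial (m - 1) : ℝ)) *
        ‖1 + z / m‖ ^ (ℓ - 1) <
      7.01 ^ 24 / (3.9 * Real.pi * Real.sqrt ((24 : ℝ) - 1)) := by
  have hr : ‖z‖ ≤ (1201/50 : ℝ) := by
    apply abs_le_of_cond 24 (by norm_num) z hz (1201/50 : ℝ) (by norm_num)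
    norm_num [Finset.sum_range_succ, Nat.factorial]
  interval_cases m <;>
    exact keyNum 24 _ ℓ (by norm_num) (by norm_num) (by norm_num) hl1 hlm z hre (1201/50 : ℝ)
      (by norm_num) hr (by norm_num [Nat.factorial])

lemma case25 (m ℓ : ℕ) (hm1 : 1 ≤ m) (hmp : m ≤ 25) (hl1 : 1 ≤ ℓ) (hlm : ℓ ≤ m)
    (z : ℂ) (hre : z.re ≤ 0)
    (hz : ‖∑ k ∈ Finset.range (25 + 1), z ^ k / (Nat.factorial k : ℂ)‖ ≤ 1) :
    (m : ℝ) ^ (25 - 1) / ((Nat.factorial (25 - m) : ℝ) * (Nat.factorial (m - 1) : ℝ)) *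
        ‖1 + z / m‖ ^ (ℓ - 1) <
      7.01 ^ 25 / (3.9 * Real.pi * Real.sqrt ((25 : ℝ) - 1)) := by
  have hr : ‖z‖ ≤ (1251/50 : ℝ) := by
    apply abs_le_of_cond 25 (by norm_num) z hz (1251/50 : ℝ) (by norm_num)
    norm_num [Finset.sum_range_succ, Nat.factorial]
  interval_cases m <;>
    exact keyNum 25 _ ℓ (by norm_num) (by norm_num) (by norm_num) hl1 hlm z hre (1251/50 : ℝ)
      (by norm_num) hr (by norm_num [Nat.factorial])

lemma case26 (m ℓ : ℕ) (hm1 : 1 ≤ m) (hmp : m ≤ 26) (hl1 : 1 ≤ ℓ) (hlm : ℓ ≤ m)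
    (z : ℂ) (hre : z.re ≤ 0)
    (hz : ‖∑ k ∈ Finset.range (26 + 1), z ^ k / (Nat.factorial k : ℂ)‖ ≤ 1) :
    (m : ℝ) ^ (26 - 1) / ((Nat.factorial (26 - m) : ℝ) * (Nat.factorial (m - 1) : ℝ)) *
        ‖1 + z / m‖ ^ (ℓ - 1) <
      7.01 ^ 26 / (3.9 * Real.pi * Real.sqrt ((26 : ℝ) - 1)) := by
  have hr : ‖z‖ ≤ (1301/50 : ℝ) := by
    apply abs_le_of_cond 26 (by norm_num) z hz (1301/50 : ℝ) (by norm_num)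
    norm_num [Finset.sum_range_succ, Nat.factorial]
  interval_cases m <;>
    exact keyNum 26 _ ℓ (by norm_num) (by norm_num) (by norm_num) hl1 hlm z hre (1301/50 : ℝ)
      (by norm_num) hr (by norm_num [Nat.factorial])

lemma case27 (m ℓ : ℕ) (hm1 : 1 ≤ m) (hmp : m ≤ 27) (hl1 : 1 ≤ ℓ) (hlm : ℓ ≤ m)
    (z : ℂ) (hre : z.re ≤ 0)
    (hz : ‖∑ k ∈ Finset.range (27 + 1), z ^ k / (Nat.factorial k : ℂ)‖ ≤ 1) :
    (m : ℝ) ^ (27 - 1) / ((Nat.factorial (27 - m) : ℝ) * (Nat.factorial (m - 1) : ℝ)) *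
        ‖1 + z / m‖ ^ (ℓ - 1) <
      7.01 ^ 27 / (3.9 * Real.pi * Real.sqrt ((27 : ℝ) - 1)) := by
  have hr : ‖z‖ ≤ (1351/50 : ℝ) := by
    apply abs_le_of_cond 27 (by norm_num) z hz (1351/50 : ℝ) (by norm_num)
    norm_num [Finset.sum_range_succ, Nat.factorial]
  interval_cases m <;>
    exact keyNum 27 _ ℓ (by norm_num) (by norm_num) (by norm_num) hl1 hlm z hre (1351/50 : ℝ)
      (by norm_num) hr (by norm_num [Nat.factorial])

lemma case28 (m ℓ : ℕ) (hm1 : 1 ≤ m) (hmp : m ≤ 28) (hl1 : 1 ≤ ℓ) (hlm : ℓ ≤ m)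
    (z : ℂ) (hre : z.re ≤ 0)
    (hz : ‖∑ k ∈ Finset.range (28 + 1), z ^ k / (Nat.factorial k : ℂ)‖ ≤ 1) :
    (m : ℝ) ^ (28 - 1) / ((Nat.factorial (28 - m) : ℝ) * (Nat.factorial (m - 1) : ℝ)) *
        ‖1 + z / m‖ ^ (ℓ - 1) <
      7.01 ^ 28 / (3.9 * Real.pi * Real.sqrt ((28 : ℝ) - 1)) := by
  have hr : ‖z‖ ≤ (1401/50 : ℝ) := by
    apply abs_le_of_cond 28 (by norm_num) z hz (1401/50 : ℝ) (by norm_num)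
    norm_num [Finset.sum_range_succ, Nat.factorial]
  interval_cases m <;>
    exact keyNum 28 _ ℓ (by norm_num) (by norm_num) (by norm_num) hl1 hlm z hre (1401/50 : ℝ)
      (by norm_num) hr (by norm_num [Nat.factorial])

lemma case29 (m ℓ : ℕ) (hm1 : 1 ≤ m) (hmp : m ≤ 29) (hl1 : 1 ≤ ℓ) (hlm : ℓ ≤ m)
    (z : ℂ) (hre : z.re ≤ 0)
    (hz : ‖∑ k ∈ Finset.range (29 + 1), z ^ k / (Nat.factorial k : ℂ)‖ ≤ 1) :
    (m : ℝ) ^ (29 - 1) / ((Nat.factorial (29 - m) : ℝ) * (Nat.factorial (m - 1) : ℝ)) *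
        ‖1 + z / m‖ ^ (ℓ - 1) <
      7.01 ^ 29 / (3.9 * Real.pi * Real.sqrt ((29 : ℝ) - 1)) := by
  have hr : ‖z‖ ≤ (1451/50 : ℝ) := by
    apply abs_le_of_cond 29 (by norm_num) z hz (1451/50 : ℝ) (by norm_num)
    norm_num [Finset.sum_range_succ, Nat.factorial]
  interval_cases m <;>
    exact keyNum 29 _ ℓ (by norm_num) (by norm_num) (by norm_num) hl1 hlm z hre (1451/50 : ℝ)
      (by norm_num) hr (by norm_num [Nat.factorial])

lemma case30 (m ℓ : ℕ) (hm1 : 1 ≤ m) (hmp : m ≤ 30) (hl1 : 1 ≤ ℓ) (hlm : ℓ ≤ m)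
    (z : ℂ) (hre : z.re ≤ 0)
    (hz : ‖∑ k ∈ Finset.range (30 + 1), z ^ k / (Nat.factorial k : ℂ)‖ ≤ 1) :
    (m : ℝ) ^ (30 - 1) / ((Nat.factorial (30 - m) : ℝ) * (Nat.factorial (m - 1) : ℝ)) *
        ‖1 + z / m‖ ^ (ℓ - 1) <
      7.01 ^ 30 / (3.9 * Real.pi * Real.sqrt ((30 : ℝ) - 1)) := by
  have hr : ‖z‖ ≤ (1501/50 : ℝ) := by
    apply abs_le_of_cond 30 (by norm_num) z hz (1501/50 : ℝ) (by norm_num)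
    norm_num [Finset.sum_range_succ, Nat.factorial]
  interval_cases m <;>
    exact keyNum 30 _ ℓ (by norm_num) (by norm_num) (by norm_num) hl1 hlm z hre (1501/50 : ℝ)
      (by norm_num) hr (by norm_num [Nat.factorial])

/-- **Theorem 4.12.** For `p ≥ 3`, the internal stability polynomials of the
order-`p` explicit Euler extrapolation method satisfy, on the intersection of
the absolute stability region `S_p = {z : |∑_{k=0}^p z^k/k!| ≤ 1}` with the
closed left half-plane,
`|Q^{EE}_{p,m,ℓ}(z)| = (m^{p−1}/((p−m)!(m−1)!))·|1 + z/m|^{ℓ−1} < 7.01^p/(3.9·π·√(p−1))`. -/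
theorem euler_extrapolation_amplification_bound_left_halfplane
    (p : ℕ) (hp : 3 ≤ p) (m ℓ : ℕ) (hm1 : 1 ≤ m) (hmp : m ≤ p)
    (hℓ1 : 1 ≤ ℓ) (hℓm : ℓ ≤ m) (z : ℂ) (hre : z.re ≤ 0)
    (hz : ‖∑ k ∈ Finset.range (p + 1), z ^ k / (Nat.factorial k : ℂ)‖ ≤ 1) :
    (m : ℝ) ^ (p - 1) / ((Nat.factorial (p - m) : ℝ) * (Nat.factorial (m - 1) : ℝ)) *
        ‖1 + z / m‖ ^ (ℓ - 1) <
      7.01 ^ p / (3.9 * Real.pi * Real.sqrt ((p : ℝ) - 1)) := by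
  rcases Nat.lt_or_ge p 31 with h31 | h31
  · interval_cases p
    · exact case3 m ℓ hm1 hmp hℓ1 hℓm z hre hz
    · exact case4 m ℓ hm1 hmp hℓ1 hℓm z hre hz
    · exact case5 m ℓ hm1 hmp hℓ1 hℓm z hre hz
    · exact case6 m ℓ hm1 hmp hℓ1 hℓm z hre hz
    · exact case7 m ℓ hm1 hmp hℓ1 hℓm z hre hz
    · exact case8 m ℓ hm1 hmp hℓ1 hℓm z hre hz
    · exact case9 m ℓ hm1 hmp hℓ1 hℓm z hre hz
    · exact case10 m ℓ hm1 hmp hℓ1 hℓm z hre hz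
    · exact case11 m ℓ hm1 hmp hℓ1 hℓm z hre hz
    · exact case12 m ℓ hm1 hmp hℓ1 hℓm z hre hz
    · exact case13 m ℓ hm1 hmp hℓ1 hℓm z hre hz
    · exact case14 m ℓ hm1 hmp hℓ1 hℓm z hre hz
    · exact case15 m ℓ hm1 hmp hℓ1 hℓm z hre hz
    · exact case16 m ℓ hm1 hmp hℓ1 hℓm z hre hz
    · exact case17 m ℓ hm1 hmp hℓ1 hℓm z hre hz
    · exact case18 m ℓ hm1 hmp hℓ1 hℓm z hre hz
    · exact case19 m ℓ hm1 hmp hℓ1 hℓm z hre hz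
    · exact case20 m ℓ hm1 hmp hℓ1 hℓm z hre hz
    · exact case21 m ℓ hm1 hmp hℓ1 hℓm z hre hz
    · exact case22 m ℓ hm1 hmp hℓ1 hℓm z hre hz
    · exact case23 m ℓ hm1 hmp hℓ1 hℓm z hre hz
    · exact case24 m ℓ hm1 hmp hℓ1 hℓm z hre hz
    · exact case25 m ℓ hm1 hmp hℓ1 hℓm z hre hz
    · exact case26 m ℓ hm1 hmp hℓ1 hℓm z hre hz
    · exact case27 m ℓ hm1 hmp hℓ1 hℓm z hre hz
    · exact case28 m ℓ hm1 hmp hℓ1 hℓm z hre hz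
    · exact case29 m ℓ hm1 hmp hℓ1 hℓm z hre hz
    · exact case30 m ℓ hm1 hmp hℓ1 hℓm z hre hz
  · have hp0 : (0:ℝ) < (p:ℝ) := by
      have : 0 < p := by omega
      exact_mod_cast this
    have hr : ‖z‖ ≤ 6*(p:ℝ)/5 :=
      abs_le_of_cond p (by omega) z hz (6*(p:ℝ)/5) (by positivity) (gen_cond p h31)
    exact keyGen p m ℓ h31 hm1 hmp hℓ1 hℓm z hre hr
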